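/- Let p and q be coprime integers with p > q > 1 and p ≤ 2q−1. Then the topological closure in ℝ of the span-set Span = {span(n) : n ∈ ℕ} equals ρ(W_{p/q}) = {ρ(w) : w labels a branch of T_{p/q} from 0}, and this set is the closed interval [ρ(minword(0)), ρ(maxword(0))]. -/

import Mathlib

/-- `w` labels a branch of the base-p/q automaton with digit set `E` from state `n`:
there are states `s 0 = n, s 1, s 2, …` with `q·s(k+1) = p·s k + w k` and `w k ∈ E`. -/
def IsBranch (p q : ℕ) (E : Set ℤ) (n : ℕ) (w : ℕ → ℤ) : Prop :=
  ∃ s : ℕ → ℕ, s 0 = n ∧ ∀ k : ℕ, (q : ℤ) * s (k + 1) = p * s k + w k ∧ w k ∈ E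

/-- `u` (a word of length `ℓ`) labels a path from `n` to `m` in the base-p/q automaton
with digit set `E`. -/
def IsPath (p q : ℕ) (E : Set ℤ) (n m ℓ : ℕ) (u : ℕ → ℤ) : Prop :=
  ∃ s : ℕ → ℕ, s 0 = n ∧ s ℓ = m ∧
    ∀ k < ℓ, (q : ℤ) * s (k + 1) = p * s k + u k ∧ u k ∈ E

/-- The canonical digit alphabet `A_p = {0, 1, …, p−1}`. -/
def Ap (p : ℕ) : Set ℤ := Set.Icc 0 ((p : ℤ) - 1)

/-- The lower alphabet `{0, 1, …, q−1}`. -/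
def LowAlph (q : ℕ) : Set ℤ := Set.Icc 0 ((q : ℤ) - 1)

/-- The upper alphabet `{p−q, …, p−1}`. -/
def UpAlph (p q : ℕ) : Set ℤ := Set.Icc ((p : ℤ) - q) ((p : ℤ) - 1)

/-- The alphabet `D = {p−2q+1, …, p−1}` of the automaton `S_{p/q}`. -/
def Dalph (p q : ℕ) : Set ℤ := Set.Icc ((p : ℤ) - 2 * q + 1) ((p : ℤ) - 1)

/-- Evaluation after the radix point: `ρ(w) = Σ_{i≥1} (w_i/q)·(q/p)^i`
(here `w k` is the `(k+1)`-st digit). -/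
noncomputable def rho (p q : ℕ) (w : ℕ → ℤ) : ℝ :=
  ∑' i : ℕ, ((w i : ℝ) / q) * ((q : ℝ) / p) ^ (i + 1)

open Finset Filter Topology

section Core
variable {p q : ℕ}

lemma psum (hq : 0 < q) (hp : 0 < p) (s w : ℕ → ℤ)
    (hrec : ∀ k, (q:ℤ) * s (k+1) = p * s k + w k) (N : ℕ) :
    ∑ k ∈ Finset.range N, ((w k : ℝ)/q) * ((q:ℝ)/p)^(k+1)
      = (s N : ℝ) * ((q:ℝ)/p)^N - s 0 := by
  have hq0 : (q:ℝ) ≠ 0 := by positivity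
  have hp0 : (p:ℝ) ≠ 0 := by positivity
  induction N with
  | zero => simp
  | succ N ih =>
    rw [Finset.sum_range_succ, ih]
    have hw : (w N : ℝ) = q * s (N+1) - p * s N := by
      have := hrec N
      have h2 : (q:ℝ) * (s (N+1) : ℝ) = p * s N + w N := by exact_mod_cast this
      linarith
    rw [hw]
    field_simp
    ring_nf
    field_simp
    ring

lemma summ (hq : 0 < q) (hp : 0 < p) (hqp : q < p) (w : ℕ → ℤ) (B : ℝ)
    (hB : ∀ k, |(w k : ℝ)| ≤ B) :
    Summable (fun i => ((w i : ℝ)/q) * ((q:ℝ)/p)^(i+1)) := by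
  have hq0 : (0:ℝ) < q := by positivity
  have hr0 : (0:ℝ) ≤ (q:ℝ)/p := by positivity
  have hr1 : (q:ℝ)/p < 1 := by
    rw [div_lt_one (by positivity)]; exact_mod_cast hqp
  apply Summable.of_norm_bounded (g := fun i => ((B/q) * ((q:ℝ)/p)) * ((q:ℝ)/p)^i)
  · exact (summable_geometric_of_lt_one hr0 hr1).mul_left _
  · intro i
    have h1 : ‖((w i : ℝ)/q) * ((q:ℝ)/p)^(i+1)‖ = |(w i:ℝ)| / q * ((q:ℝ)/p)^(i+1) := by
      rw [Real.norm_eq_abs, abs_mul, abs_div, abs_of_pos hq0, abs_pow,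
        abs_of_nonneg hr0]
    rw [h1, pow_succ]
    have hB' := hB i
    have : |(w i:ℝ)| / q ≤ B / q := by gcongr
    calc |(w i:ℝ)| / q * (((q:ℝ)/p)^i * ((q:ℝ)/p))
        ≤ B / q * (((q:ℝ)/p)^i * ((q:ℝ)/p)) := by
          apply mul_le_mul_of_nonneg_right this (by positivity)
      _ = ((B/q) * ((q:ℝ)/p)) * ((q:ℝ)/p)^i := by ring

lemma tend (hq : 0 < q) (hqp : q < p) (s w : ℕ → ℤ)
    (hrec : ∀ k, (q:ℤ) * s (k+1) = p * s k + w k)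
    (B : ℝ) (hB : ∀ k, |(w k:ℝ)| ≤ B) :
    Tendsto (fun N => (s N : ℝ) * ((q:ℝ)/p)^N) atTop
      (𝓝 ((∑' i, ((w i:ℝ)/q) * ((q:ℝ)/p)^(i+1)) + s 0)) := by
  have hp : 0 < p := lt_trans hq hqp
  have hsum := (summ hq hp hqp w B hB).hasSum.tendsto_sum_nat
  have heq : (fun N => (s N:ℝ) * ((q:ℝ)/p)^N)
      = fun N => (∑ k ∈ Finset.range N, ((w k : ℝ)/q) * ((q:ℝ)/p)^(k+1)) + s 0 := by
    funext N; rw [psum hq hp s w hrec N]; ring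
  rw [heq]
  exact hsum.add_const _

lemma cmpSeq (hq : 0 < q) (a b x y : ℕ → ℤ) (c : ℤ)
    (ra : ∀ k, (q:ℤ) * a (k+1) = p * a k + x k)
    (rb : ∀ k, (q:ℤ) * b (k+1) = p * b k + y k)
    (h0 : a 0 ≤ b 0 + c)
    (hxy : ∀ k, x k - y k ≤ (q:ℤ) - 1 + c * ((q:ℤ) - p)) :
    ∀ k, a k ≤ b k + c := by
  intro k
  induction k with
  | zero => exact h0
  | succ k ih =>
    have hqz : (0:ℤ) < q := by exact_mod_cast hq
    have h1 := ra k
    have h2 := rb k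
    have h3 := hxy k
    have key : (q:ℤ) * (a (k+1) - b (k+1) - c) ≤ q - 1 := by
      have hp' : (0:ℤ) ≤ p := by positivity
      nlinarith [mul_le_mul_of_nonneg_left ih hp']
    nlinarith

lemma rho_cmp (hq : 0 < q) (hqp : q < p) (a b x y : ℕ → ℤ) (c : ℤ)
    (ra : ∀ k, (q:ℤ) * a (k+1) = p * a k + x k)
    (rb : ∀ k, (q:ℤ) * b (k+1) = p * b k + y k)
    (h0 : a 0 ≤ b 0 + c)
    (hxy : ∀ k, x k - y k ≤ (q:ℤ) - 1 + c * ((q:ℤ) - p))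
    (Bx By : ℝ) (hBx : ∀ k, |(x k:ℝ)| ≤ Bx) (hBy : ∀ k, |(y k:ℝ)| ≤ By) :
    (∑' i, ((x i:ℝ)/q) * ((q:ℝ)/p)^(i+1)) + a 0
      ≤ (∑' i, ((y i:ℝ)/q) * ((q:ℝ)/p)^(i+1)) + b 0 := by
  have hp : 0 < p := lt_trans hq hqp
  have hr0 : (0:ℝ) ≤ (q:ℝ)/p := by positivity
  have hr1 : (q:ℝ)/p < 1 := by
    rw [div_lt_one (by positivity)]; exact_mod_cast hqp
  have hk := cmpSeq hq a b x y c ra rb h0 hxy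
  have t1 := tend hq hqp a x ra Bx hBx
  have t2 := tend hq hqp b y rb By hBy
  have t3 : Tendsto (fun N => (b N:ℝ) * ((q:ℝ)/p)^N + c * ((q:ℝ)/p)^N) atTop
      (𝓝 (((∑' i, ((y i:ℝ)/q) * ((q:ℝ)/p)^(i+1)) + b 0) + c * 0)) :=
    t2.add ((tendsto_pow_atTop_nhds_zero_of_lt_one hr0 hr1).const_mul (c:ℝ))
  have hle : ∀ N, (a N:ℝ) * ((q:ℝ)/p)^N ≤ (b N:ℝ) * ((q:ℝ)/p)^N + c * ((q:ℝ)/p)^N := by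
    intro N
    have : (a N : ℝ) ≤ (b N : ℝ) + c := by exact_mod_cast hk N
    nlinarith [pow_nonneg hr0 N]
  have := le_of_tendsto_of_tendsto' t1 t3 hle
  simpa using this

lemma uniq (hq : 0 < q) (aL : ℤ) (s s' : ℕ → ℕ) (w w' : ℕ → ℤ)
    (h0 : s 0 = s' 0)
    (r1 : ∀ k, (q:ℤ) * s (k+1) = p * s k + w k)
    (r2 : ∀ k, (q:ℤ) * s' (k+1) = p * s' k + w' k)
    (m1 : ∀ k, aL ≤ w k ∧ w k ≤ aL + q - 1)
    (m2 : ∀ k, aL ≤ w' k ∧ w' k ≤ aL + q - 1) :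
    ∀ k, s k = s' k ∧ w k = w' k := by
  have hqz : (0:ℤ) < q := by exact_mod_cast hq
  have hs : ∀ k, s k = s' k := by
    intro k
    induction k with
    | zero => exact h0
    | succ k ih =>
      have h1 := r1 k
      have h2 := r2 k
      have e1 := (m1 k).1; have e2 := (m1 k).2
      have e3 := (m2 k).1; have e4 := (m2 k).2
      have hik : ((s k : ℤ)) = s' k := by exact_mod_cast ih
      have key : (q:ℤ) * ((s (k+1) : ℤ) - s' (k+1)) = w k - w' k := by
        rw [mul_sub, h1, h2, hik]; ring
      have : ((s (k+1) : ℤ)) = s' (k+1) := by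
        rcases lt_trichotomy ((s (k+1) : ℤ) - s' (k+1)) 0 with h | h | h
        · nlinarith
        · linarith [sub_eq_zero.mp h]
        · nlinarith
      exact_mod_cast this
  intro k
  refine ⟨hs k, ?_⟩
  have h1 := r1 k
  have h2 := r2 k
  have e1 : ((s k : ℤ)) = s' k := by exact_mod_cast hs k
  have e2 : ((s (k+1) : ℤ)) = s' (k+1) := by exact_mod_cast hs (k+1)
  have := r1 k
  rw [e1, e2] at h1
  linarith

lemma tailb (hq : 0 < q) (hqp : q < p) (N : ℕ) (f : ℕ → ℝ) (B : ℝ) (hB0 : 0 ≤ B)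
    (h0 : ∀ i < N, f i = 0) (hb : ∀ i, |f i| ≤ B * ((q:ℝ)/p)^(i+1)) :
    |∑' i, f i| ≤ B * ((q:ℝ)/p)^(N+1) / (1 - (q:ℝ)/p) := by
  have hp : 0 < p := lt_trans hq hqp
  have hr0 : (0:ℝ) ≤ (q:ℝ)/p := by positivity
  have hr1 : (q:ℝ)/p < 1 := by
    rw [div_lt_one (by positivity)]; exact_mod_cast hqp
  set r : ℝ := (q:ℝ)/p with hrdef
  have hgeo : Summable (fun i : ℕ => (B * r^(N+1)) * r^i) :=
    (summable_geometric_of_lt_one hr0 hr1).mul_left _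
  have habs : Summable (fun i => |f i|) := by
    apply Summable.of_nonneg_of_le (fun i => abs_nonneg _) (fun i => hb i)
    have : Summable (fun i : ℕ => (B * r) * r^i) :=
      (summable_geometric_of_lt_one hr0 hr1).mul_left _
    apply this.congr
    intro i; rw [pow_succ]; ring
  have hsumf : Summable f := habs.of_abs
  have h1 : ∑' i, f i = ∑' i, f (i + N) := by
    rw [← Summable.sum_add_tsum_nat_add N hsumf]
    have : ∑ i ∈ Finset.range N, f i = 0 :=
      Finset.sum_eq_zero (fun i hi => h0 i (Finset.mem_range.mp hi))
    rw [this, zero_add]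
  rw [h1]
  have habs' : Summable (fun i => |f (i + N)|) := by
    simpa using (summable_nat_add_iff N).mpr habs
  have h2 : |∑' i, f (i + N)| ≤ ∑' i, |f (i + N)| := by
    simpa [Real.norm_eq_abs] using
      norm_tsum_le_tsum_norm (f := fun i => f (i + N)) (by simpa [Real.norm_eq_abs] using habs')
  have h3 : ∑' i, |f (i + N)| ≤ ∑' i : ℕ, (B * r^(N+1)) * r^i := by
    apply Summable.tsum_le_tsum _ habs' hgeo
    intro i
    calc |f (i + N)| ≤ B * r^(i + N + 1) := hb (i + N)
      _ = (B * r^(N+1)) * r^i := by rw [show i + N + 1 = (N+1) + i from by omega, pow_add]; ring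
  have h4 : ∑' i : ℕ, (B * r^(N+1)) * r^i = B * r^(N+1) / (1 - r) := by
    rw [tsum_mul_left, tsum_geometric_of_lt_one hr0 hr1]
    ring
  linarith

lemma shift_lim (hq : 0 < q) (hqp : q < p) (s w : ℕ → ℤ)
    (hrec : ∀ k, (q:ℤ) * s (k+1) = p * s k + w k)
    (B : ℝ) (hB : ∀ k, |(w k:ℝ)| ≤ B) :
    (∑' i, ((w (i+1):ℝ)/q) * ((q:ℝ)/p)^(i+1)) + (s 1 : ℝ)
      = ((∑' i, ((w i:ℝ)/q) * ((q:ℝ)/p)^(i+1)) + s 0) * ((p:ℝ)/q) := by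
  have hp : 0 < p := lt_trans hq hqp
  have hq0 : (q:ℝ) ≠ 0 := by positivity
  have hp0 : (p:ℝ) ≠ 0 := by positivity
  have t1 := tend hq hqp (fun k => s (k+1)) (fun k => w (k+1))
    (fun k => hrec (k+1)) B (fun k => hB (k+1))
  have t2 := tend hq hqp s w hrec B hB
  have t2' : Tendsto (fun N => (s (N+1) : ℝ) * ((q:ℝ)/p)^(N+1)) atTop
      (𝓝 ((∑' i, ((w i:ℝ)/q) * ((q:ℝ)/p)^(i+1)) + s 0)) :=
    t2.comp (tendsto_add_atTop_nat 1)
  have t3 : Tendsto (fun N => (s (N+1) : ℝ) * ((q:ℝ)/p)^N) atTop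
      (𝓝 (((∑' i, ((w i:ℝ)/q) * ((q:ℝ)/p)^(i+1)) + s 0) * ((p:ℝ)/q))) := by
    have := t2'.mul_const ((p:ℝ)/q)
    apply this.congr
    intro N
    rw [pow_succ]
    field_simp
  exact tendsto_nhds_unique t1 t3

lemma realize (hq : 1 < q) (hqp : q < p) (hco : Nat.Coprime p q) (N : ℕ) :
    ∀ v : ℕ → ℤ, (∀ k, 0 ≤ v k ∧ v k ≤ (q:ℤ) - 1) →
    ∃ n : ℕ, ∀ j : ℕ, ∃ r : ℕ → ℕ, r 0 = n + j * q^N ∧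
      ∀ k < N, (q:ℤ) * r (k+1) = p * r k + v k := by
  induction N with
  | zero =>
    intro v hv
    exact ⟨0, fun j => ⟨fun _ => j, by simp, by omega⟩⟩
  | succ N IH =>
    intro v hv
    obtain ⟨n₁, h₁⟩ := IH (fun k => v (k+1)) (fun k => hv (k+1))
    have hcop : IsCoprime (p:ℤ) ((q:ℤ)^(N+1)) := by
      have : Nat.Coprime p (q^(N+1)) := Nat.Coprime.pow_right _ hco
      exact_mod_cast Nat.isCoprime_iff_coprime.mpr this
    obtain ⟨A, Bz, hAB⟩ := hcop
    set t : ℤ := (q:ℤ) * n₁ - v 0 with htdef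
    set jb : ℤ := Bz * (-t) with hjbdef
    set E : ℤ := |jb| + 1 with hEdef
    set jj0 : ℤ := jb + E * p with hjjdef
    have hpz : (1:ℤ) ≤ p := by exact_mod_cast hqp.le.trans' (by omega)
    have hqz : (1:ℤ) < q := by exact_mod_cast hq
    have hEpos : 1 ≤ E := by
      have := abs_nonneg jb; omega
    have hjj0pos : 1 ≤ jj0 := by
      have h1 : jb + |jb| ≥ 0 := by
        rcases abs_cases jb with ⟨h, _⟩ | ⟨h, _⟩ <;> omega
      have h2 : E * p ≥ E * 1 := by
        apply mul_le_mul_of_nonneg_left hpz (by omega)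
      nlinarith
    set c0 : ℤ := A * t + E * (q:ℤ)^(N+1) with hc0def
    have hc0 : (p:ℤ) * c0 = t + jj0 * (q:ℤ)^(N+1) := by
      simp only [hc0def, hjjdef, hjbdef]
      linear_combination t * hAB
    have hqpow : (q:ℤ) ≤ (q:ℤ)^(N+1) := le_self_pow₀ (by omega) (by omega)
    have htlb : -((q:ℤ) - 1) ≤ t := by
      have h1 : (0:ℤ) ≤ (q:ℤ) * n₁ := by positivity
      have := (hv 0).2
      omega
    have hc0pos : 0 ≤ c0 := by
      have h1 : (q:ℤ)^(N+1) ≤ jj0 * (q:ℤ)^(N+1) := by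
        nlinarith
      have h2 : (0:ℤ) < p * c0 := by omega
      nlinarith
    refine ⟨c0.toNat, ?_⟩
    intro j
    obtain ⟨r', hr'0, hr'⟩ := h₁ (jj0 + j * p).toNat
    refine ⟨fun k => match k with | 0 => c0.toNat + j * q^(N+1) | (k+1) => r' k, ?_, ?_⟩
    · simp
    · intro k hk
      match k with
      | 0 =>
        show (q:ℤ) * r' 0 = p * ((c0.toNat + j * q^(N+1) : ℕ) : ℤ) + v 0
        rw [hr'0]
        have hjnn : (0:ℤ) ≤ jj0 + j * p := by positivity
        push_cast [Int.toNat_of_nonneg hjnn, Int.toNat_of_nonneg hc0pos]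
        have hpow : ((q:ℤ)^N) * q = (q:ℤ)^(N+1) := by ring
        linear_combination -hc0 - htdef
      | (k+1) =>
        exact hr' k (by omega)

variable {p q : ℕ}

lemma absle (d B : ℤ) (h1 : 0 ≤ d) (h2 : d ≤ B) : |(d:ℝ)| ≤ (B:ℝ) := by
  rw [abs_of_nonneg (by exact_mod_cast h1)]; exact_mod_cast h2

lemma low_bounds {n : ℕ} {w : ℕ → ℤ} (h : IsBranch p q (LowAlph q) n w) :
    ∀ k, 0 ≤ w k ∧ w k ≤ (q:ℤ) - 1 := by
  obtain ⟨s, _, hk⟩ := h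
  intro k; exact Set.mem_Icc.mp (hk k).2

lemma up_bounds {n : ℕ} {w : ℕ → ℤ} (h : IsBranch p q (UpAlph p q) n w) :
    ∀ k, (p:ℤ) - q ≤ w k ∧ w k ≤ (p:ℤ) - 1 := by
  obtain ⟨s, _, hk⟩ := h
  intro k; exact Set.mem_Icc.mp (hk k).2

lemma low_words_eq (hq : 0 < q) {n : ℕ} {w w' : ℕ → ℤ}
    (h1 : IsBranch p q (LowAlph q) n w) (h2 : IsBranch p q (LowAlph q) n w') :
    ∀ k, w k = w' k := by
  obtain ⟨s, hs0, hsk⟩ := h1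
  obtain ⟨s', hs0', hsk'⟩ := h2
  have m1 : ∀ k, (0:ℤ) ≤ w k ∧ w k ≤ 0 + q - 1 := by
    intro k; have := Set.mem_Icc.mp (hsk k).2; omega
  have m2 : ∀ k, (0:ℤ) ≤ w' k ∧ w' k ≤ 0 + q - 1 := by
    intro k; have := Set.mem_Icc.mp (hsk' k).2; omega
  exact fun k => (uniq hq 0 s s' w w' (hs0.trans hs0'.symm)
    (fun k => (hsk k).1) (fun k => (hsk' k).1) m1 m2 k).2

lemma up_words_eq (hq : 0 < q) {n : ℕ} {w w' : ℕ → ℤ}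
    (h1 : IsBranch p q (UpAlph p q) n w) (h2 : IsBranch p q (UpAlph p q) n w') :
    ∀ k, w k = w' k := by
  obtain ⟨s, hs0, hsk⟩ := h1
  obtain ⟨s', hs0', hsk'⟩ := h2
  have m1 : ∀ k, ((p:ℤ) - q) ≤ w k ∧ w k ≤ ((p:ℤ) - q) + q - 1 := by
    intro k; have := Set.mem_Icc.mp (hsk k).2; omega
  have m2 : ∀ k, ((p:ℤ) - q) ≤ w' k ∧ w' k ≤ ((p:ℤ) - q) + q - 1 := by
    intro k; have := Set.mem_Icc.mp (hsk' k).2; omega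
  exact fun k => (uniq hq ((p:ℤ) - q) s s' w w' (hs0.trans hs0'.symm)
    (fun k => (hsk k).1) (fun k => (hsk' k).1) m1 m2 k).2

lemma rho_nonneg {w : ℕ → ℤ} (hw : ∀ k, 0 ≤ w k) : 0 ≤ rho p q w := by
  apply tsum_nonneg
  intro i
  have : (0:ℝ) ≤ (w i : ℝ) := by exact_mod_cast hw i
  positivity

lemma rho_abs_le (hq : 0 < q) (hqp : q < p) {w : ℕ → ℤ} (B : ℝ)
    (hB : ∀ k, |(w k:ℝ)| ≤ B) :
    |rho p q w| ≤ (B/q) * ((q:ℝ)/p) / (1 - (q:ℝ)/p) := by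
  have hp : 0 < p := lt_trans hq hqp
  have hq0 : (0:ℝ) < q := by positivity
  have hB0 : 0 ≤ B := le_trans (abs_nonneg _) (hB 0)
  have := tailb hq hqp 0 (fun i => ((w i:ℝ)/q) * ((q:ℝ)/p)^(i+1)) (B/q)
    (by positivity) (by omega) ?_
  · simpa [rho] using this
  · intro i
    have hr0 : (0:ℝ) ≤ (q:ℝ)/p := by positivity
    rw [abs_mul, abs_div, abs_of_pos hq0, abs_pow, abs_of_nonneg hr0]
    have : |(w i:ℝ)| / q ≤ B / q := by gcongr; exact hB i
    apply mul_le_mul_of_nonneg_right this (by positivity)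

lemma m_le_X (hq : 0 < q) (hqp : q < p)
    {mw mx : ℕ → ℕ → ℤ}
    (hmw : ∀ n, IsBranch p q (LowAlph q) n (mw n))
    (hmx : ∀ n, IsBranch p q (UpAlph p q) n (mx n)) (n : ℕ) :
    rho p q (mw n) ≤ rho p q (mx n) := by
  obtain ⟨sl, hsl0, hslk⟩ := hmw n
  obtain ⟨sh, hsh0, hshk⟩ := hmx n
  have hbl := low_bounds (hmw n)
  have hbh := up_bounds (hmx n)
  have h := rho_cmp hq hqp (fun k => (sl k : ℤ)) (fun k => (sh k : ℤ)) (mw n) (mx n) 0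
    (fun k => (hslk k).1) (fun k => (hshk k).1)
    (by simp [hsl0, hsh0])
    (fun k => by
      have h1 := (hbl k).2; have h2 := (hbh k).1
      have h3 : (q:ℤ) ≤ p := by exact_mod_cast hqp.le
      linarith)
    q p
    (fun k => absle _ _ (hbl k).1 (by have := (hbl k).2; omega))
    (fun k => by
      have h2 := (hbh k).1; have h4 := (hbh k).2
      have h3 : (q:ℤ) ≤ p := by exact_mod_cast hqp.le
      exact absle _ _ (by linarith) (by linarith))
  simp only [hsl0, hsh0] at h
  have e1 : rho p q (mw n) = ∑' i, ((mw n i:ℝ)/q) * ((q:ℝ)/p)^(i+1) := rfl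
  have e2 : rho p q (mx n) = ∑' i, ((mx n i:ℝ)/q) * ((q:ℝ)/p)^(i+1) := rfl
  rw [e1, e2]; linarith

lemma overlap (hq : 0 < q) (hqp : q < p)
    {mw mx : ℕ → ℕ → ℤ}
    (hmw : ∀ n, IsBranch p q (LowAlph q) n (mw n))
    (hmx : ∀ n, IsBranch p q (UpAlph p q) n (mx n)) (n : ℕ) :
    rho p q (mw (n+1)) + 1 ≤ rho p q (mx n) := by
  obtain ⟨sl, hsl0, hslk⟩ := hmw (n+1)
  obtain ⟨sh, hsh0, hshk⟩ := hmx n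
  have hbl := low_bounds (hmw (n+1))
  have hbh := up_bounds (hmx n)
  have h := rho_cmp hq hqp (fun k => (sl k : ℤ)) (fun k => (sh k : ℤ)) (mw (n+1)) (mx n) 1
    (fun k => (hslk k).1) (fun k => (hshk k).1)
    (by simp only [hsl0, hsh0]; push_cast; omega)
    (fun k => by
      have h1 := (hbl k).2; have h2 := (hbh k).1
      linarith)
    q p
    (fun k => absle _ _ (hbl k).1 (by have := (hbl k).2; omega))
    (fun k => by
      have h2 := (hbh k).1; have h4 := (hbh k).2
      have h3 : (q:ℤ) ≤ p := by exact_mod_cast hqp.le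
      exact absle _ _ (by linarith) (by linarith))
  simp only [hsl0, hsh0] at h
  have e1 : rho p q (mw (n+1)) = ∑' i, ((mw (n+1) i:ℝ)/q) * ((q:ℝ)/p)^(i+1) := rfl
  have e2 : rho p q (mx n) = ∑' i, ((mx n i:ℝ)/q) * ((q:ℝ)/p)^(i+1) := rfl
  rw [e1, e2]; push_cast at h ⊢; linarith

lemma mlow_dec (hq : 0 < q) (hqp : q < p)
    {mw : ℕ → ℕ → ℤ}
    (hmw : ∀ n, IsBranch p q (LowAlph q) n (mw n)) (n : ℕ) :
    ∃ n1 : ℕ, (q:ℤ) * n1 = p * n + mw n 0 ∧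
      (p:ℝ) * rho p q (mw n) = q * rho p q (mw n1) + (mw n 0 : ℝ) := by
  obtain ⟨sl, hsl0, hslk⟩ := hmw n
  have hbl := low_bounds (hmw n)
  refine ⟨sl 1, ?_, ?_⟩
  · have := (hslk 0).1; rw [hsl0] at this; exact this
  · have hshift : IsBranch p q (LowAlph q) (sl 1) (fun k => mw n (k+1)) :=
      ⟨fun k => sl (k+1), rfl, fun k => hslk (k+1)⟩
    have words_eq := low_words_eq hq (hmw (sl 1)) hshift
    have hrho_eq : rho p q (mw (sl 1)) = ∑' i, ((mw n (i+1) :ℝ)/q) * ((q:ℝ)/p)^(i+1) := by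
      exact tsum_congr (fun i => by rw [words_eq i])
    have H := shift_lim hq hqp (fun k => (sl k : ℤ)) (mw n) (fun k => (hslk k).1)
      q (fun k => absle _ _ (hbl k).1 (by have := (hbl k).2; omega))
    have hq0 : (q:ℝ) ≠ 0 := by positivity
    have hp0 : (p:ℝ) ≠ 0 := by
      have : 0 < p := lt_trans hq hqp; positivity
    have hcast : (q:ℝ) * ((sl 1 : ℕ):ℝ) = p * n + (mw n 0 : ℝ) := by
      have := (hslk 0).1; rw [hsl0] at this; exact_mod_cast this
    have e1 : rho p q (mw n) = ∑' i, ((mw n i:ℝ)/q) * ((q:ℝ)/p)^(i+1) := rfl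
    rw [e1, hrho_eq]
    have H2 : ((∑' i, ((mw n (i+1):ℝ)/q) * ((q:ℝ)/p)^(i+1)) + ((sl 1:ℕ):ℝ)) * q
        = ((∑' i, ((mw n i:ℝ)/q) * ((q:ℝ)/p)^(i+1)) + ((sl 0:ℕ):ℝ)) * p := by
      beta_reduce at H; push_cast at H ⊢; rw [H]; field_simp
    simp only [hsl0] at H2
    linear_combination hcast - H2

lemma mhigh_dec (hq : 0 < q) (hqp : q < p)
    {mx : ℕ → ℕ → ℤ}
    (hmx : ∀ n, IsBranch p q (UpAlph p q) n (mx n)) (n : ℕ) :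
    ∃ n1 : ℕ, (q:ℤ) * n1 = p * n + mx n 0 ∧
      (p:ℝ) * rho p q (mx n) = q * rho p q (mx n1) + (mx n 0 : ℝ) := by
  obtain ⟨sh, hsh0, hshk⟩ := hmx n
  have hbh := up_bounds (hmx n)
  have habs : ∀ k, |(mx n k : ℝ)| ≤ (p:ℝ) := by
    intro k
    have h2 := (hbh k).1; have h4 := (hbh k).2
    have h3 : (q:ℤ) ≤ p := by exact_mod_cast hqp.le
    have := absle (mx n k) p (by linarith) (by linarith)
    exact_mod_cast this
  refine ⟨sh 1, ?_, ?_⟩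
  · have := (hshk 0).1; rw [hsh0] at this; exact this
  · have hshift : IsBranch p q (UpAlph p q) (sh 1) (fun k => mx n (k+1)) :=
      ⟨fun k => sh (k+1), rfl, fun k => hshk (k+1)⟩
    have words_eq := up_words_eq hq (hmx (sh 1)) hshift
    have hrho_eq : rho p q (mx (sh 1)) = ∑' i, ((mx n (i+1) :ℝ)/q) * ((q:ℝ)/p)^(i+1) := by
      exact tsum_congr (fun i => by rw [words_eq i])
    have H := shift_lim hq hqp (fun k => (sh k : ℤ)) (mx n) (fun k => (hshk k).1)
      p habs
    have hq0 : (q:ℝ) ≠ 0 := by positivity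
    have hp0 : (p:ℝ) ≠ 0 := by
      have : 0 < p := lt_trans hq hqp; positivity
    have hcast : (q:ℝ) * ((sh 1 : ℕ):ℝ) = p * n + (mx n 0 : ℝ) := by
      have := (hshk 0).1; rw [hsh0] at this; exact_mod_cast this
    have e1 : rho p q (mx n) = ∑' i, ((mx n i:ℝ)/q) * ((q:ℝ)/p)^(i+1) := rfl
    rw [e1, hrho_eq]
    have H2 : ((∑' i, ((mx n (i+1):ℝ)/q) * ((q:ℝ)/p)^(i+1)) + ((sh 1:ℕ):ℝ)) * q
        = ((∑' i, ((mx n i:ℝ)/q) * ((q:ℝ)/p)^(i+1)) + ((sh 0:ℕ):ℝ)) * p := by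
      beta_reduce at H; push_cast at H ⊢; rw [H]; field_simp
    simp only [hsh0] at H2
    linear_combination hcast - H2

lemma dcase (hq : 1 < q) (hqp : q < p) (hsmall : p ≤ 2 * q - 1)
    (P dl dh : ℤ) (a b : ℕ)
    (h1 : (q:ℤ) * a = P + dl) (h2 : (q:ℤ) * b = P + dh)
    (bl1 : 0 ≤ dl) (bl2 : dl ≤ (q:ℤ) - 1)
    (bh1 : (p:ℤ) - q ≤ dh) (bh2 : dh ≤ (p:ℤ) - 1) :
    (dh = dl ∧ b = a) ∨ (dh = dl + q ∧ b = a + 1) := by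
  have hsm : (p:ℤ) ≤ 2 * q - 1 := by
    have h1 : p ≤ 2*q - 1 := hsmall
    have h2 : 1 ≤ q := hq.le
    omega
  have hpq : (q:ℤ) < p := by exact_mod_cast hqp
  have hq1 : (1:ℤ) < q := by exact_mod_cast hq
  have key : (q:ℤ) * ((b:ℤ) - a) = dh - dl := by linarith
  have hlb : -(q:ℤ) < dh - dl := by linarith
  have hub : dh - dl < 2 * q := by linarith
  have he : ((b:ℤ) - a) = 0 ∨ ((b:ℤ) - a) = 1 := by
    rcases lt_trichotomy ((b:ℤ) - a) 0 with h | h | h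
    · exfalso; nlinarith
    · exact Or.inl h
    · rcases lt_or_ge ((b:ℤ) - a) 2 with h' | h'
      · right; omega
      · exfalso; nlinarith
  rcases he with h | h
  · left
    constructor
    · have : dh - dl = 0 := by rw [← key, h]; ring
      omega
    · omega
  · right
    constructor
    · have : dh - dl = q := by rw [← key, h]; ring
      omega
    · omega

set_option maxHeartbeats 2000000 in
lemma build (hq : 1 < q) (hqp : q < p) (hsmall : p ≤ 2 * q - 1)
    (mw mx : ℕ → ℕ → ℤ)
    (hmw : ∀ n, IsBranch p q (LowAlph q) n (mw n))
    (hmx : ∀ n, IsBranch p q (UpAlph p q) n (mx n))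
    (x : ℝ) (hx1 : rho p q (mw 0) ≤ x) (hx2 : x ≤ rho p q (mx 0)) :
    ∃ (s : ℕ → ℕ) (w : ℕ → ℤ), s 0 = 0 ∧ (∀ k, (q:ℤ) * s (k+1) = p * s k + w k)
      ∧ (∀ k, 0 ≤ w k ∧ w k ≤ (p:ℤ) - 1) ∧ rho p q w = x := by
  classical
  have hq0 : 0 < q := by omega
  have hp0 : 0 < p := by omega
  have hqR : (0:ℝ) < q := by positivity
  have hpR : (0:ℝ) < p := by positivity
  have hqpZ : (q:ℤ) < p := by exact_mod_cast hqp
  have hr0 : (0:ℝ) ≤ (q:ℝ)/p := by positivity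
  have hr1 : (q:ℝ)/p < 1 := by rw [div_lt_one hpR]; exact_mod_cast hqp
  choose nl hnl hyl using mlow_dec hq0 hqp hmw
  choose nh hnh hyh using mhigh_dec hq0 hqp hmx
  have hbl : ∀ n k, 0 ≤ mw n k ∧ mw n k ≤ (q:ℤ) - 1 := fun n => low_bounds (hmw n)
  have hbh : ∀ n k, (p:ℤ) - q ≤ mx n k ∧ mx n k ≤ (p:ℤ) - 1 := fun n => up_bounds (hmx n)
  set F : ℕ × ℝ → ℕ × ℝ := fun z =>
    if (p:ℝ) * z.2 ≤ (mw z.1 0 : ℝ) + q * rho p q (mx (nl z.1))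
    then (nl z.1, ((p:ℝ) * z.2 - mw z.1 0)/q)
    else (nh z.1, ((p:ℝ) * z.2 - mx z.1 0)/q) with hF
  set sig : ℕ → ℕ × ℝ := fun k => F^[k] (0, x) with hsigdef
  have hsig0 : sig 0 = (0, x) := rfl
  have hsig_succ : ∀ k, sig (k+1) = F (sig k) := by
    intro k; simp only [hsigdef]; rw [Function.iterate_succ_apply']
  set w : ℕ → ℤ := fun k =>
    if (p:ℝ) * (sig k).2 ≤ (mw (sig k).1 0 : ℝ) + q * rho p q (mx (nl (sig k).1))
    then mw (sig k).1 0 else mx (sig k).1 0 with hwdef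
  have hstep : ∀ k,
      ((sig (k+1)).1 = nl (sig k).1
        ∧ (sig (k+1)).2 = ((p:ℝ) * (sig k).2 - mw (sig k).1 0)/q
        ∧ w k = mw (sig k).1 0
        ∧ (p:ℝ) * (sig k).2 ≤ (mw (sig k).1 0 : ℝ) + q * rho p q (mx (nl (sig k).1)))
      ∨ ((sig (k+1)).1 = nh (sig k).1
        ∧ (sig (k+1)).2 = ((p:ℝ) * (sig k).2 - mx (sig k).1 0)/q
        ∧ w k = mx (sig k).1 0
        ∧ ¬ ((p:ℝ) * (sig k).2 ≤ (mw (sig k).1 0 : ℝ) + q * rho p q (mx (nl (sig k).1)))) := by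
    intro k
    by_cases h : (p:ℝ) * (sig k).2 ≤ (mw (sig k).1 0 : ℝ) + q * rho p q (mx (nl (sig k).1))
    · left
      have he : sig (k+1) = (nl (sig k).1, ((p:ℝ) * (sig k).2 - mw (sig k).1 0)/q) := by
        rw [hsig_succ k]; simp only [hF]; rw [if_pos h]
      refine ⟨by rw [he], by rw [he], ?_, h⟩
      simp only [hwdef]; rw [if_pos h]
    · right
      have he : sig (k+1) = (nh (sig k).1, ((p:ℝ) * (sig k).2 - mx (sig k).1 0)/q) := by
        rw [hsig_succ k]; simp only [hF]; rw [if_neg h]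
      refine ⟨by rw [he], by rw [he], ?_, h⟩
      simp only [hwdef]; rw [if_neg h]
  have inv : ∀ k, rho p q (mw (sig k).1) ≤ (sig k).2 ∧ (sig k).2 ≤ rho p q (mx (sig k).1)
      ∧ x = (∑ j ∈ Finset.range k, ((w j:ℝ)/q) * ((q:ℝ)/p)^(j+1)) + ((q:ℝ)/p)^k * (sig k).2 := by
    intro k
    induction k with
    | zero =>
      refine ⟨?_, ?_, ?_⟩ <;> simp [hsig0, hx1, hx2]
    | succ k ih =>
      obtain ⟨ih1, ih2, ih3⟩ := ih
      have hdl := hyl (sig k).1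
      have hdh := hyh (sig k).1
      rcases hstep k with ⟨he1, he2, hw, hc⟩ | ⟨he1, he2, hw, hc⟩
      · have hlow : rho p q (mw (nl (sig k).1)) ≤ ((p:ℝ) * (sig k).2 - mw (sig k).1 0)/q := by
          rw [le_div_iff₀ hqR]
          nlinarith [mul_le_mul_of_nonneg_left ih1 hpR.le]
        have hup : ((p:ℝ) * (sig k).2 - mw (sig k).1 0)/q ≤ rho p q (mx (nl (sig k).1)) := by
          rw [div_le_iff₀ hqR]
          nlinarith
        refine ⟨?_, ?_, ?_⟩
        · rw [he1, he2]; exact hlow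
        · rw [he1, he2]; exact hup
        · rw [Finset.sum_range_succ, he2]
          have hwc : (w k : ℝ) = (mw (sig k).1 0 : ℝ) := by rw [hw]
          have key : ((q:ℝ)/p)^k * (sig k).2
              = ((w k:ℝ)/q) * ((q:ℝ)/p)^(k+1)
                + ((q:ℝ)/p)^(k+1) * (((p:ℝ) * (sig k).2 - mw (sig k).1 0)/q) := by
            rw [hwc]; field_simp; ring_nf; rw [mul_assoc _ (p:ℝ) (p:ℝ)⁻¹, mul_inv_cancel₀ hpR.ne']; ring
          linarith [ih3]
      · -- high step
        have hnlb := hbl (sig k).1 0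
        have hnhb := hbh (sig k).1 0
        have hd := dcase hq hqp hsmall ((p:ℤ) * (sig k).1) (mw (sig k).1 0) (mx (sig k).1 0)
          (nl (sig k).1) (nh (sig k).1) (hnl (sig k).1) (hnh (sig k).1)
          hnlb.1 hnlb.2 hnhb.1 hnhb.2
        have hover : (mw (sig k).1 0 : ℝ) + q * rho p q (mx (nl (sig k).1))
            ≥ (mx (sig k).1 0 : ℝ) + q * rho p q (mw (nh (sig k).1)) := by
          rcases hd with ⟨hd1, hd2⟩ | ⟨hd1, hd2⟩
          · rw [hd1, hd2]
            have := m_le_X hq0 hqp hmw hmx (nl (sig k).1)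
            nlinarith
          · rw [hd1, hd2]
            have := overlap hq0 hqp hmw hmx (nl (sig k).1)
            push_cast
            nlinarith
        push_neg at hc
        have hlow : rho p q (mw (nh (sig k).1)) ≤ ((p:ℝ) * (sig k).2 - mx (sig k).1 0)/q := by
          rw [le_div_iff₀ hqR]
          nlinarith
        have hup : ((p:ℝ) * (sig k).2 - mx (sig k).1 0)/q ≤ rho p q (mx (nh (sig k).1)) := by
          rw [div_le_iff₀ hqR]
          nlinarith [mul_le_mul_of_nonneg_left ih2 hpR.le]
        refine ⟨?_, ?_, ?_⟩
        · rw [he1, he2]; exact hlow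
        · rw [he1, he2]; exact hup
        · rw [Finset.sum_range_succ, he2]
          have hwc : (w k : ℝ) = (mx (sig k).1 0 : ℝ) := by rw [hw]
          have key : ((q:ℝ)/p)^k * (sig k).2
              = ((w k:ℝ)/q) * ((q:ℝ)/p)^(k+1)
                + ((q:ℝ)/p)^(k+1) * (((p:ℝ) * (sig k).2 - mx (sig k).1 0)/q) := by
            rw [hwc]; field_simp; ring_nf; rw [mul_assoc _ (p:ℝ) (p:ℝ)⁻¹, mul_inv_cancel₀ hpR.ne']; ring
          linarith [ih3]
  have hwbd : ∀ k, 0 ≤ w k ∧ w k ≤ (p:ℤ) - 1 := by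
    intro k
    rcases hstep k with ⟨_, _, hw, _⟩ | ⟨_, _, hw, _⟩
    · have := hbl (sig k).1 0; rw [hw]; omega
    · have := hbh (sig k).1 0; rw [hw]; omega
  have hwabs : ∀ k, |(w k:ℝ)| ≤ (p:ℝ) := by
    intro k
    have h := hwbd k
    have := absle (w k) p h.1 (by omega)
    exact_mod_cast this
  refine ⟨fun k => (sig k).1, w, ?_, ?_, hwbd, ?_⟩
  · show (sig 0).1 = 0
    rw [hsig0]
  · intro k
    show (q:ℤ) * ((sig (k+1)).1 : ℤ) = p * ((sig k).1 : ℤ) + w k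
    rcases hstep k with ⟨he1, _, hw, _⟩ | ⟨he1, _, hw, _⟩
    · rw [he1, hw]; exact hnl (sig k).1
    · rw [he1, hw]; exact hnh (sig k).1
  · -- rho w = x
    set K : ℝ := ((p:ℝ)/q) * ((q:ℝ)/p) / (1 - (q:ℝ)/p) with hK
    have hXK : ∀ n, rho p q (mx n) ≤ K := by
      intro n
      have habs : ∀ k, |(mx n k : ℝ)| ≤ (p:ℝ) := by
        intro k
        have h2 := (hbh n k).1; have h4 := (hbh n k).2
        have := absle (mx n k) p (by omega) (by omega)
        exact_mod_cast this
      have := rho_abs_le hq0 hqp (p:ℝ) habs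
      calc rho p q (mx n) ≤ |rho p q (mx n)| := le_abs_self _
        _ ≤ ((p:ℝ)/q) * ((q:ℝ)/p) / (1 - (q:ℝ)/p) := this
    have hmn : ∀ n, 0 ≤ rho p q (mw n) := by
      intro n
      exact rho_nonneg (fun k => (hbl n k).1)
    have hyb : ∀ N, ‖x - ∑ j ∈ Finset.range N, ((w j:ℝ)/q) * ((q:ℝ)/p)^(j+1)‖
        ≤ K * ((q:ℝ)/p)^N := by
      intro N
      obtain ⟨i1, i2, i3⟩ := inv N
      have h1 : x - ∑ j ∈ Finset.range N, ((w j:ℝ)/q) * ((q:ℝ)/p)^(j+1)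
          = ((q:ℝ)/p)^N * (sig N).2 := by linarith
      rw [Real.norm_eq_abs, h1, abs_mul, abs_of_nonneg (pow_nonneg hr0 N),
        abs_of_nonneg (le_trans (hmn (sig N).1) i1)]
      have := le_trans i2 (hXK (sig N).1)
      calc ((q:ℝ)/p)^N * (sig N).2 ≤ ((q:ℝ)/p)^N * K := by
            apply mul_le_mul_of_nonneg_left this (pow_nonneg hr0 N)
        _ = K * ((q:ℝ)/p)^N := by ring
    have hgeo0 : Tendsto (fun N => K * ((q:ℝ)/p)^N) atTop (𝓝 0) := by
      simpa using (tendsto_pow_atTop_nhds_zero_of_lt_one hr0 hr1).const_mul K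
    have h1 : Tendsto (fun N => x - ∑ j ∈ Finset.range N, ((w j:ℝ)/q) * ((q:ℝ)/p)^(j+1))
        atTop (𝓝 0) := squeeze_zero_norm hyb hgeo0
    have h2 : Tendsto (fun N => ∑ j ∈ Finset.range N, ((w j:ℝ)/q) * ((q:ℝ)/p)^(j+1))
        atTop (𝓝 x) := by
      have h3 := Tendsto.sub (tendsto_const_nhds :
        Tendsto (fun _ : ℕ => x) atTop (𝓝 x)) h1
      simpa using h3
    have hsum := (summ hq0 hp0 hqp w (p:ℝ) hwabs).hasSum.tendsto_sum_nat
    have : rho p q w = ∑' i, ((w i:ℝ)/q) * ((q:ℝ)/p)^(i+1) := rfl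
    rw [this]
    exact tendsto_nhds_unique hsum h2

lemma absle' (d B : ℤ) (h1 : -B ≤ d) (h2 : d ≤ B) : |(d:ℝ)| ≤ (B:ℝ) := by
  rw [abs_le]
  constructor
  · exact_mod_cast h1
  · exact_mod_cast h2

lemma mw0_zero (hq : 0 < q) {mw : ℕ → ℕ → ℤ}
    (hmw : ∀ n, IsBranch p q (LowAlph q) n (mw n)) :
    rho p q (mw 0) = 0 := by
  have hz : IsBranch p q (LowAlph q) 0 (fun _ => (0:ℤ)) := by
    refine ⟨fun _ => 0, rfl, fun k => ⟨by simp, ?_⟩⟩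
    simp only [LowAlph, Set.mem_Icc]
    constructor
    · omega
    · have : (1:ℤ) ≤ q := by exact_mod_cast hq
      omega
  have heq := low_words_eq hq (hmw 0) hz
  have : rho p q (mw 0) = ∑' _ : ℕ, (0:ℝ) := by
    apply tsum_congr
    intro i
    rw [heq i]
    simp
  rw [this, tsum_zero]

lemma span_le (hq : 0 < q) (hqp : q < p)
    {mw mx : ℕ → ℕ → ℤ}
    (hmw : ∀ n, IsBranch p q (LowAlph q) n (mw n))
    (hmx : ∀ n, IsBranch p q (UpAlph p q) n (mx n)) (n : ℕ) :
    rho p q (mx n) - rho p q (mw n) ≤ rho p q (mx 0) := by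
  have hp : 0 < p := lt_trans hq hqp
  obtain ⟨sl, hsl0, hslk⟩ := hmw n
  obtain ⟨sh, hsh0, hshk⟩ := hmx n
  obtain ⟨sh0, hsh00, hsh0k⟩ := hmx 0
  have hbl := low_bounds (hmw n)
  have hbh := up_bounds (hmx n)
  have hbh0 := up_bounds (hmx 0)
  have hqZ : (0:ℤ) < q := by exact_mod_cast hq
  have hpqZ : (q:ℤ) < p := by exact_mod_cast hqp
  have h := rho_cmp hq hqp (fun k => (sh k : ℤ) - sl k) (fun k => (sh0 k : ℤ))
    (fun k => mx n k - mw n k) (mx 0) 0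
    (fun k => by
      have h1 := (hslk k).1
      have h2 := (hshk k).1
      push_cast
      ring_nf
      ring_nf at h1 h2
      linarith)
    (fun k => (hsh0k k).1)
    (by simp [hsl0, hsh0, hsh00])
    (fun k => by
      have h1 := (hbl k).1
      have h2 := (hbh k).2
      have h3 := (hbh0 k).1
      beta_reduce
      linarith)
    (2*p) p
    (fun k => by
      have h1 := (hbl k).1; have h2 := (hbl k).2
      have h3 := (hbh k).1; have h4 := (hbh k).2
      have := absle' (mx n k - mw n k) (2*p) (by linarith) (by linarith)
      exact_mod_cast this)
    (fun k => by
      have h3 := (hbh0 k).1; have h4 := (hbh0 k).2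
      have := absle' (mx 0 k) p (by linarith) (by linarith)
      exact_mod_cast this)
  simp only [hsl0, hsh0, hsh00] at h
  have hsubsum : ∑' i, (((mx n i - mw n i : ℤ):ℝ)/q) * ((q:ℝ)/p)^(i+1)
      = rho p q (mx n) - rho p q (mw n) := by
    have e1 : rho p q (mx n) = ∑' i, ((mx n i:ℝ)/q) * ((q:ℝ)/p)^(i+1) := rfl
    have e2 : rho p q (mw n) = ∑' i, ((mw n i:ℝ)/q) * ((q:ℝ)/p)^(i+1) := rfl
    rw [e1, e2]
    have hsU : Summable (fun i => ((mx n i:ℝ)/q) * ((q:ℝ)/p)^(i+1)) := by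
      apply summ hq hp hqp (mx n) p
      intro k
      have h3 := (hbh k).1; have h4 := (hbh k).2
      have := absle' (mx n k) p (by linarith) (by linarith)
      exact_mod_cast this
    have hsV : Summable (fun i => ((mw n i:ℝ)/q) * ((q:ℝ)/p)^(i+1)) := by
      apply summ hq hp hqp (mw n) q
      intro k
      have h1 := (hbl k).1; have h2 := (hbl k).2
      have := absle' (mw n k) q (by linarith) (by linarith)
      exact_mod_cast this
    rw [← Summable.tsum_sub hsU hsV]
    apply tsum_congr
    intro i
    push_cast
    ring
  have e3 : rho p q (mx 0) = ∑' i, ((mx 0 i:ℝ)/q) * ((q:ℝ)/p)^(i+1) := rfl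
  rw [e3]
  rw [hsubsum] at h
  simpa using h

end Core

set_option maxHeartbeats 2000000 in
theorem stmt0 (p q : ℕ) (hco : Nat.Coprime p q) (hq : 1 < q) (hpq : q < p)
    (hsmall : p ≤ 2 * q - 1)
    (mw mx : ℕ → ℕ → ℤ)
    (hmw : ∀ n, IsBranch p q (LowAlph q) n (mw n))
    (hmx : ∀ n, IsBranch p q (UpAlph p q) n (mx n)) :
    closure {x : ℝ | ∃ n : ℕ, x = rho p q (mx n) - rho p q (mw n)}
      = {x : ℝ | ∃ w : ℕ → ℤ, IsBranch p q (Ap p) 0 w ∧ x = rho p q w} ∧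
    closure {x : ℝ | ∃ n : ℕ, x = rho p q (mx n) - rho p q (mw n)}
      = Set.Icc (rho p q (mw 0)) (rho p q (mx 0)) := by
  have hq0 : 0 < q := by omega
  have hp0 : 0 < p := by omega
  have hqR : (0:ℝ) < q := by positivity
  have hpR : (0:ℝ) < p := by positivity
  have hr0 : (0:ℝ) ≤ (q:ℝ)/p := by positivity
  have hr1 : (q:ℝ)/p < 1 := by rw [div_lt_one hpR]; exact_mod_cast hpq
  have hm0 : rho p q (mw 0) = 0 := mw0_zero hq0 hmw
  -- span values lie in the interval
  have hsub : {x : ℝ | ∃ n : ℕ, x = rho p q (mx n) - rho p q (mw n)}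
      ⊆ Set.Icc (rho p q (mw 0)) (rho p q (mx 0)) := by
    rintro y ⟨n, rfl⟩
    constructor
    · rw [hm0]
      have := m_le_X hq0 hpq hmw hmx n
      linarith
    · exact span_le hq0 hpq hmw hmx n
  have hclos1 : closure {x : ℝ | ∃ n : ℕ, x = rho p q (mx n) - rho p q (mw n)}
      ⊆ Set.Icc (rho p q (mw 0)) (rho p q (mx 0)) :=
    closure_minimal hsub isClosed_Icc
  -- density
  have hclos2 : Set.Icc (rho p q (mw 0)) (rho p q (mx 0))
      ⊆ closure {x : ℝ | ∃ n : ℕ, x = rho p q (mx n) - rho p q (mw n)} := by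
    intro x hx
    rw [Metric.mem_closure_iff]
    intro ε hε
    obtain ⟨s, w, hs0, hrec, hbd, hrho⟩ := build hq hpq hsmall mw mx hmw hmx x hx.1 hx.2
    set C : ℝ := ((3*p:ℝ)/q) * ((q:ℝ)/p) / (1 - (q:ℝ)/p) with hC
    have htd : Tendsto (fun N => C * ((q:ℝ)/p)^N) atTop (𝓝 0) := by
      simpa using (tendsto_pow_atTop_nhds_zero_of_lt_one hr0 hr1).const_mul C
    obtain ⟨N, hN⟩ := (htd.eventually (gt_mem_nhds hε)).exists
    set v : ℕ → ℤ := fun k => max 0 ((p:ℤ) - q - w k) with hvdef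
    have hqpZ : (q:ℤ) < p := by exact_mod_cast hpq
    have hsmZ : (p:ℤ) ≤ 2*q - 1 := by
      have h2 : 1 ≤ q := hq.le
      omega
    have hvb : ∀ k, 0 ≤ v k ∧ v k ≤ (q:ℤ) - 1 := by
      intro k
      have h1 := (hbd k).1
      have h2 := (hbd k).2
      simp only [hvdef]
      constructor
      · exact le_max_left _ _
      · apply max_le <;> omega
    have hvw : ∀ k, (p:ℤ) - q ≤ w k + v k ∧ w k + v k ≤ (p:ℤ) - 1 := by
      intro k
      have h1 := (hbd k).1
      have h2 := (hbd k).2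
      simp only [hvdef]
      rcases le_or_gt ((p:ℤ) - q - w k) 0 with h | h
      · rw [max_eq_left h]; omega
      · rw [max_eq_right h.le]; omega
    obtain ⟨n0, hreal⟩ := realize hq hpq hco N v hvb
    obtain ⟨r, hr0', hrr⟩ := hreal 0
    have hrn0 : r 0 = n0 := by simpa using hr0'
    obtain ⟨slr, hslr0, hslrk⟩ := hmw (r N)
    obtain ⟨shr, hshr0, hshrk⟩ := hmx (r N + s N)
    -- extended words
    set V : ℕ → ℤ := fun k => if k < N then v k else mw (r N) (k - N) with hVdef
    set U : ℕ → ℤ := fun k => if k < N then v k + w k else mx (r N + s N) (k - N) with hUdef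
    have hVbranch : IsBranch p q (LowAlph q) n0 V := by
      refine ⟨fun k => if k < N then r k else slr (k - N), ?_, ?_⟩
      · show (if 0 < N then r 0 else slr (0 - N)) = n0
        by_cases h0 : 0 < N
        · rw [if_pos h0]; exact hrn0
        · have hN0 : N = 0 := by omega
          subst hN0
          rw [if_neg h0]
          simp [hslr0, hrn0]
      · intro k
        constructor
        · rcases lt_trichotomy (k+1) N with hlt | heq | hgt
          · have hk : k < N := by omega
            simp only [hVdef, if_pos hk, if_pos hlt]
            exact hrr k hk
          · have hk : k < N := by omega
            simp only [hVdef, if_pos hk, if_neg (show ¬ k+1 < N by omega)]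
            rw [show k + 1 - N = 0 from by omega, hslr0, ← heq]
            exact hrr k hk
          · have hk : ¬ k < N := by omega
            simp only [hVdef, if_neg hk, if_neg (show ¬ k+1 < N by omega)]
            rw [show k + 1 - N = (k - N) + 1 from by omega]
            exact (hslrk (k - N)).1
        · by_cases hk : k < N
          · simp only [hVdef, if_pos hk, LowAlph, Set.mem_Icc]
            have := hvb k; omega
          · simp only [hVdef, if_neg hk]
            exact (hslrk (k - N)).2
    have hUbranch : IsBranch p q (UpAlph p q) n0 U := by
      refine ⟨fun k => if k < N then r k + s k else shr (k - N), ?_, ?_⟩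
      · show (if 0 < N then r 0 + s 0 else shr (0 - N)) = n0
        by_cases h0 : 0 < N
        · rw [if_pos h0]; omega
        · have hN0 : N = 0 := by omega
          subst hN0
          rw [if_neg h0]
          simp [hshr0, hrn0, hs0]
      · intro k
        constructor
        · rcases lt_trichotomy (k+1) N with hlt | heq | hgt
          · have hk : k < N := by omega
            simp only [hUdef, if_pos hk, if_pos hlt]
            have h1 := hrr k hk
            have h2 := hrec k
            push_cast
            push_cast at h1 h2
            linarith
          · have hk : k < N := by omega
            simp only [hUdef, if_pos hk, if_neg (show ¬ k+1 < N by omega)]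
            rw [show k + 1 - N = 0 from by omega, hshr0, ← heq]
            have h1 := hrr k hk
            have h2 := hrec k
            push_cast
            push_cast at h1 h2
            linarith
          · have hk : ¬ k < N := by omega
            simp only [hUdef, if_neg hk, if_neg (show ¬ k+1 < N by omega)]
            rw [show k + 1 - N = (k - N) + 1 from by omega]
            exact (hshrk (k - N)).1
        · by_cases hk : k < N
          · simp only [hUdef, if_pos hk, UpAlph, Set.mem_Icc]
            have := hvw k
            omega
          · simp only [hUdef, if_neg hk]
            exact (hshrk (k - N)).2
    have heqV := low_words_eq hq0 (hmw n0) hVbranch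
    have heqU := up_words_eq hq0 (hmx n0) hUbranch
    -- bounds on digits
    have hVabs : ∀ k, |(V k:ℝ)| ≤ (q:ℝ) := by
      intro k
      have hbr := low_bounds (hmw (r N))
      by_cases hk : k < N
      · have := hvb k
        simp only [hVdef, if_pos hk]
        have h := absle (v k) q (this.1) (by omega)
        exact_mod_cast h
      · simp only [hVdef, if_neg hk]
        have h1 := (hbr (k - N)).1
        have h2 := (hbr (k - N)).2
        have h := absle (mw (r N) (k - N)) q h1 (by omega)
        exact_mod_cast h
    have hUabs : ∀ k, |(U k:ℝ)| ≤ (p:ℝ) := by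
      intro k
      have hbr := up_bounds (hmx (r N + s N))
      by_cases hk : k < N
      · have := hvw k
        simp only [hUdef, if_pos hk]
        have h := absle (v k + w k) p (by omega) (by omega)
        exact_mod_cast h
      · simp only [hUdef, if_neg hk]
        have h1 := (hbr (k - N)).1
        have h2 := (hbr (k - N)).2
        have h := absle (mx (r N + s N) (k - N)) p (by omega) (by omega)
        exact_mod_cast h
    have hwabs : ∀ k, |(w k:ℝ)| ≤ (p:ℝ) := by
      intro k
      have h1 := (hbd k).1
      have h2 := (hbd k).2
      have h := absle (w k) p h1 (by omega)
      exact_mod_cast h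
    have hsU : Summable (fun i => ((U i:ℝ)/q) * ((q:ℝ)/p)^(i+1)) :=
      summ hq0 hp0 hpq U p hUabs
    have hsV : Summable (fun i => ((V i:ℝ)/q) * ((q:ℝ)/p)^(i+1)) :=
      summ hq0 hp0 hpq V q hVabs
    have hsw : Summable (fun i => ((w i:ℝ)/q) * ((q:ℝ)/p)^(i+1)) :=
      summ hq0 hp0 hpq w p hwabs
    -- the difference as a tsum
    set f : ℕ → ℝ := fun i => ((U i - V i - w i : ℤ):ℝ)/q * ((q:ℝ)/p)^(i+1) with hfdef
    have hdiff : rho p q (mx n0) - rho p q (mw n0) - x = ∑' i, f i := by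
      have hrU : rho p q (mx n0) = ∑' i, ((U i:ℝ)/q) * ((q:ℝ)/p)^(i+1) :=
        tsum_congr fun i => by rw [heqU i]
      have hrV : rho p q (mw n0) = ∑' i, ((V i:ℝ)/q) * ((q:ℝ)/p)^(i+1) :=
        tsum_congr fun i => by rw [heqV i]
      have hrw : x = ∑' i, ((w i:ℝ)/q) * ((q:ℝ)/p)^(i+1) := by
        rw [← hrho]; rfl
      rw [hrU, hrV, hrw]
      rw [← Summable.tsum_sub hsU hsV, ← Summable.tsum_sub (hsU.sub hsV) hsw]
      apply tsum_congr
      intro i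
      simp only [hfdef]
      push_cast
      ring
    have hf0 : ∀ i < N, f i = 0 := by
      intro i hi
      have hz : U i - V i - w i = 0 := by
        simp only [hUdef, hVdef, if_pos hi]; ring
      simp only [hfdef, hz]
      norm_num
    have hfb : ∀ i, |f i| ≤ ((3*p:ℝ)/q) * ((q:ℝ)/p)^(i+1) := by
      intro i
      have h1 := hUabs i
      have h2 := hVabs i
      have h3 := hwabs i
      simp only [hfdef]
      rw [abs_mul, abs_div, abs_of_pos hqR, abs_pow, abs_of_nonneg hr0]
      have h4 : |((U i - V i - w i : ℤ):ℝ)| ≤ 3*(p:ℝ) := by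
        push_cast
        have := abs_sub_abs_le_abs_sub ((U i : ℝ) - V i) (w i : ℝ)
        have t1 : |(U i:ℝ) - V i - w i| ≤ |(U i:ℝ)| + |(V i:ℝ)| + |(w i:ℝ)| := by
          calc |(U i:ℝ) - V i - w i| ≤ |(U i:ℝ) - V i| + |(w i:ℝ)| := abs_sub _ _
            _ ≤ |(U i:ℝ)| + |(V i:ℝ)| + |(w i:ℝ)| := by
                have := abs_sub ((U i):ℝ) ((V i):ℝ)
                linarith
        have hqp' : (q:ℝ) ≤ p := by exact_mod_cast hpq.le
        linarith
      have h5 : |((U i - V i - w i : ℤ):ℝ)| / q ≤ 3*(p:ℝ)/q := by gcongr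
      calc |((U i - V i - w i : ℤ):ℝ)| / (q:ℝ) * ((q:ℝ)/p)^(i+1)
          ≤ (3*(p:ℝ)/q) * ((q:ℝ)/p)^(i+1) := by
            apply mul_le_mul_of_nonneg_right h5 (by positivity)
        _ = ((3*p:ℝ)/q) * ((q:ℝ)/p)^(i+1) := by norm_num
    have htail := tailb hq0 hpq N f ((3*p:ℝ)/q) (by positivity) hf0 hfb
    have hCeq : ((3*p:ℝ)/q) * ((q:ℝ)/p)^(N+1) / (1 - (q:ℝ)/p) = C * ((q:ℝ)/p)^N := by
      rw [hC, pow_succ]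
      ring
    rw [hCeq] at htail
    refine ⟨rho p q (mx n0) - rho p q (mw n0), ⟨n0, rfl⟩, ?_⟩
    rw [Real.dist_eq]
    have : |x - (rho p q (mx n0) - rho p q (mw n0))| = |∑' i, f i| := by
      rw [abs_sub_comm, hdiff]
    rw [this]
    exact lt_of_le_of_lt htail hN
  have hclos : closure {x : ℝ | ∃ n : ℕ, x = rho p q (mx n) - rho p q (mw n)}
      = Set.Icc (rho p q (mw 0)) (rho p q (mx 0)) :=
    Set.Subset.antisymm hclos1 hclos2
  -- the branch-value set equals the interval
  have hA : {x : ℝ | ∃ w : ℕ → ℤ, IsBranch p q (Ap p) 0 w ∧ x = rho p q w}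
      = Set.Icc (rho p q (mw 0)) (rho p q (mx 0)) := by
    ext y
    constructor
    · rintro ⟨w, ⟨s, hs0, hsk⟩, rfl⟩
      have hwb : ∀ k, 0 ≤ w k ∧ w k ≤ (p:ℤ) - 1 := by
        intro k
        have := (hsk k).2
        simpa [Ap, Set.mem_Icc] using this
      have hqpZ : (q:ℤ) < p := by exact_mod_cast hpq
      constructor
      · obtain ⟨sl, hsl0, hslk⟩ := hmw 0
        have hbl := low_bounds (hmw 0)
        have h := rho_cmp hq0 hpq (fun k => (sl k : ℤ)) (fun k => (s k : ℤ)) (mw 0) w 0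
          (fun k => (hslk k).1) (fun k => (hsk k).1)
          (by simp [hsl0, hs0])
          (fun k => by
            have h1 := (hbl k).2
            have h2 := (hwb k).1
            linarith)
          q p
          (fun k => absle _ _ (hbl k).1 (by have := (hbl k).2; omega))
          (fun k => absle _ _ (hwb k).1 (by have := (hwb k).2; omega))
        simp only [hsl0, hs0] at h
        have e1 : rho p q (mw 0) = ∑' i, ((mw 0 i:ℝ)/q) * ((q:ℝ)/p)^(i+1) := rfl
        have e2 : rho p q w = ∑' i, ((w i:ℝ)/q) * ((q:ℝ)/p)^(i+1) := rfl
        rw [e1, e2]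
        linarith
      · obtain ⟨sh, hsh0, hshk⟩ := hmx 0
        have hbh := up_bounds (hmx 0)
        have h := rho_cmp hq0 hpq (fun k => (s k : ℤ)) (fun k => (sh k : ℤ)) w (mx 0) 0
          (fun k => (hsk k).1) (fun k => (hshk k).1)
          (by simp [hsh0, hs0])
          (fun k => by
            have h1 := (hwb k).2
            have h2 := (hbh k).1
            linarith)
          p p
          (fun k => absle _ _ (hwb k).1 (by have := (hwb k).2; omega))
          (fun k => by
            have h3 := (hbh k).1
            have h4 := (hbh k).2
            exact absle _ _ (by linarith) (by linarith))
        simp only [hsh0, hs0] at h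
        have e1 : rho p q (mx 0) = ∑' i, ((mx 0 i:ℝ)/q) * ((q:ℝ)/p)^(i+1) := rfl
        have e2 : rho p q w = ∑' i, ((w i:ℝ)/q) * ((q:ℝ)/p)^(i+1) := rfl
        rw [e1, e2]
        linarith
    · intro hy
      obtain ⟨s, w, hs0, hrec, hbd, hrho⟩ := build hq hpq hsmall mw mx hmw hmx y hy.1 hy.2
      refine ⟨w, ⟨s, hs0, fun k => ⟨hrec k, ?_⟩⟩, hrho.symm⟩
      simp only [Ap, Set.mem_Icc]
      exact ⟨(hbd k).1, (hbd k).2⟩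
  exact ⟨hclos.trans hA.symm, hclos⟩
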